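/- arXiv:2101.08205 — 3 statements merged into one kernel-verified Lean document; each statement's English description precedes it below -/
import Mathlib

section
/- For a module decomposition with independent components, the Birnbaum importance of component i ∈ M in the composed system equals the product of the Birnbaum importance of the module within the system and the Birnbaum importance of i within the module: ∂H/∂p_i = ∂h_Ψ/∂p_M · ∂h_χ/∂p_i, where H(p) = h_Ψ(h_χ(p^M), p^{M^C}). -/
open Finset

def bval (b : Bool) : ℝ := if b then 1 else 0

/-- Reliability polynomial of the module structure `χ`. -/
def relChi {α : Type*} [Fintype α] [DecidableEq α] (χ : (α → Bool) → Bool)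
    (p : α → ℝ) : ℝ :=
  ∑ x : α → Bool, bval (χ x) * ∏ a, if x a then p a else 1 - p a

/-- Reliability polynomial of the organizing structure `Ψ` in the module
reliability `q` and the reliabilities of the remaining components. -/
def relPsi {β : Type*} [Fintype β] [DecidableEq β] (Ψ : Bool → (β → Bool) → Bool)
    (q : ℝ) (p : β → ℝ) : ℝ :=
  ∑ b : Bool, ∑ y : β → Bool,
    bval (Ψ b y) * (if b then q else 1 - q) * ∏ j, if y j then p j else 1 - p j

lemma relChi_affine {α : Type*} [Fintype α] [DecidableEq α]
    (χ : (α → Bool) → Bool) (pα : α → ℝ) (i : α) (t : ℝ) :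
    relChi χ (Function.update pα i t) =
      relChi χ (Function.update pα i 0) +
        t * (relChi χ (Function.update pα i 1) - relChi χ (Function.update pα i 0)) := by
  have hprod : ∀ (s : ℝ) (x : α → Bool),
      (∏ a, if x a then Function.update pα i s a else 1 - Function.update pα i s a)
        = (if x i then s else 1 - s) *
            ∏ a ∈ univ.erase i, (if x a then pα a else 1 - pα a) := by
    intro s x
    rw [← Finset.mul_prod_erase univ _ (mem_univ i)]
    congr 1
    · simp [Function.update_self]
    · refine Finset.prod_congr rfl fun a ha => ?_
      rw [Function.update_of_ne (Finset.ne_of_mem_erase ha)]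
  have key : ∀ s : ℝ, relChi χ (Function.update pα i s)
      = ∑ x : α → Bool, bval (χ x) * ((if x i then s else 1 - s) *
          ∏ a ∈ univ.erase i, (if x a then pα a else 1 - pα a)) := by
    intro s
    unfold relChi
    exact Finset.sum_congr rfl fun x _ => by rw [hprod]
  rw [key, key, key, ← Finset.sum_sub_distrib, Finset.mul_sum, ← Finset.sum_add_distrib]
  refine Finset.sum_congr rfl fun x _ => ?_
  cases hx : x i <;> simp [hx] <;> ring

lemma relPsi_affine {β : Type*} [Fintype β] [DecidableEq β]
    (Ψ : Bool → (β → Bool) → Bool) (pβ : β → ℝ) (q : ℝ) :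
    relPsi Ψ q pβ = relPsi Ψ 0 pβ + q * (relPsi Ψ 1 pβ - relPsi Ψ 0 pβ) := by
  unfold relPsi
  rw [← Finset.sum_sub_distrib, Finset.mul_sum, ← Finset.sum_add_distrib]
  refine Finset.sum_congr rfl fun b _ => ?_
  rw [← Finset.sum_sub_distrib, Finset.mul_sum, ← Finset.sum_add_distrib]
  refine Finset.sum_congr rfl fun y _ => ?_
  cases b <;> simp <;> ring

/-- Birnbaum importance of a module component in the composed system equals the
importance of the module for the system times the importance of the component
within the module: `∂H/∂p_i = ∂h_Ψ/∂q · ∂h_χ/∂p_i`. -/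
theorem module_birnbaum_chain_rule {α β : Type*} [Fintype α] [DecidableEq α]
    [Fintype β] [DecidableEq β]
    (χ : (α → Bool) → Bool) (Ψ : Bool → (β → Bool) → Bool)
    (pα : α → ℝ) (pβ : β → ℝ) (i : α) :
    HasDerivAt (fun t : ℝ => relPsi Ψ (relChi χ (Function.update pα i t)) pβ)
      ((relPsi Ψ 1 pβ - relPsi Ψ 0 pβ)
        * (relChi χ (Function.update pα i 1) - relChi χ (Function.update pα i 0)))
      (pα i) := by
  set P0 := relPsi Ψ 0 pβ
  set ΔP := relPsi Ψ 1 pβ - relPsi Ψ 0 pβ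
  set C0 := relChi χ (Function.update pα i 0)
  set ΔC := relChi χ (Function.update pα i 1) - relChi χ (Function.update pα i 0)
  have heq : (fun t : ℝ => relPsi Ψ (relChi χ (Function.update pα i t)) pβ)
      = fun t : ℝ => (P0 + C0 * ΔP) + t * (ΔP * ΔC) := by
    funext t
    rw [relPsi_affine, relChi_affine]
    ring
  rw [heq]
  simpa using (hasDerivAt_mul_const (ΔP * ΔC)).const_add (P0 + C0 * ΔP)
end

section
/- The Barlow–Proschan structural importance admits the combinatorial formula I_φ(i) = ∫_0^1 [h(1_i, p·1) − h(0_i, p·1)] dp = Σ_{r=1}^n n_r(i) · (n−r)!(r−1)!/n!, where n_r(i) is the number of vectors x with Σ_{j≠i} x_j = r−1 and φ(1_i,x) − φ(0_i,x) = 1. -/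
open Finset intervalIntegral

def rel {n : ℕ} (φ : (Fin n → Bool) → Bool) (p : Fin n → ℝ) : ℝ :=
  ∑ x : Fin n → Bool, bval (φ x) * ∏ j, if x j then p j else 1 - p j

def numCrit {n : ℕ} (φ : (Fin n → Bool) → Bool) (i : Fin n) (r : ℕ) : ℕ :=
  (Finset.univ.filter (fun x : Fin n → Bool =>
      x i = false ∧
      (∑ j ∈ Finset.univ.erase i, if x j then 1 else 0) = r - 1 ∧
      φ (Function.update x i true) = true ∧ φ (Function.update x i false) = false)).card

/- ------------ auxiliary material ------------- -/

lemma beta_step (a b : ℕ) :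
    ∫ p in (0:ℝ)..1, p ^ a * (1 - p) ^ (b + 1)
      = ((b:ℝ)+1)/((a:ℝ)+1) * ∫ p in (0:ℝ)..1, p ^ (a+1) * (1 - p) ^ b := by
  have h := intervalIntegral.integral_mul_deriv_eq_deriv_mul
    (u := fun p : ℝ => (1 - p) ^ (b + 1)) (u' := fun p : ℝ => -((b:ℝ)+1) * (1 - p) ^ b)
    (v := fun p : ℝ => p ^ (a+1) / ((a:ℝ)+1)) (v' := fun p : ℝ => p ^ a)
    (a := (0:ℝ)) (b := 1)
    (fun x _ => by
      have h0 : HasDerivAt (fun p : ℝ => 1 - p) (0 - 1) x :=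
        (hasDerivAt_const x (1:ℝ)).sub (hasDerivAt_id x)
      have : HasDerivAt (fun p : ℝ => (1 - p) ^ (b + 1))
          (((b:ℕ)+1 : ℕ) * (1 - x) ^ b * (-1)) x := by
        simpa using h0.fun_pow (b+1)
      refine this.congr_deriv ?_
      push_cast; ring)
    (fun x _ => by
      have : HasDerivAt (fun p : ℝ => p ^ (a+1) / ((a:ℝ)+1))
          ((((a:ℕ)+1 : ℕ) * x ^ a) / ((a:ℝ)+1)) x := (hasDerivAt_pow (a+1) x).div_const _
      refine this.congr_deriv ?_
      have ha : ((a:ℝ)+1) ≠ 0 := by positivity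
      push_cast; field_simp)
    ((Continuous.intervalIntegrable (by continuity) _ _))
    ((Continuous.intervalIntegrable (by continuity) _ _))
  have ha : ((a:ℝ)+1) ≠ 0 := by positivity
  rw [show (∫ p in (0:ℝ)..1, p ^ a * (1 - p) ^ (b + 1))
      = ∫ p in (0:ℝ)..1, (1 - p) ^ (b+1) * p ^ a by
        congr 1; ext p; ring] at *
  rw [h]
  simp only [one_pow, sub_self, sub_zero, zero_pow, Nat.succ_ne_zero, Ne, not_false_iff]
  rw [show (fun x : ℝ => -((b:ℝ)+1) * (1-x)^b * (x ^ (a+1) / ((a:ℝ)+1))) = fun x : ℝ => (-(((b:ℝ)+1)/((a:ℝ)+1))) * (x ^ (a+1) * (1-x)^b) from by ext x; field_simp]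
  rw [intervalIntegral.integral_const_mul]
  ring

lemma beta_nat (a b : ℕ) :
    ∫ p in (0:ℝ)..1, p ^ a * (1 - p) ^ b
      = (Nat.factorial a * Nat.factorial b : ℕ) / (Nat.factorial (a + b + 1) : ℝ) := by
  induction b generalizing a with
  | zero =>
      have h1 : ((a:ℝ)+1) ≠ 0 := by positivity
      simp only [pow_zero, mul_one, integral_pow, one_pow, Nat.factorial_one]
      rw [show a + 0 + 1 = a + 1 from rfl, eq_div_iff (by positivity)]
      have : (0:ℝ) ^ (a+1) = 0 := zero_pow (Nat.succ_ne_zero a)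
      rw [this]
      push_cast [Nat.factorial_succ]
      field_simp
      simp
  | succ b ih =>
      rw [beta_step, ih]
      have h1 : (Nat.factorial (a+1+b+1) : ℝ) ≠ 0 := by positivity
      have h2 : ((a:ℝ)+1) ≠ 0 := by positivity
      rw [show a + (b+1) + 1 = a + 1 + b + 1 from by ring]
      push_cast [Nat.factorial_succ]
      field_simp

/-- the count `∑_{j ≠ i} x j`. -/
def kfun {n : ℕ} (i : Fin n) (y : Fin n → Bool) : ℕ :=
  ∑ j ∈ Finset.univ.erase i, if y j then 1 else 0

lemma kfun_card {n : ℕ} (i : Fin n) (y : Fin n → Bool) :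
    kfun i y = ((Finset.univ.erase i).filter (fun j => y j = true)).card := by
  rw [Finset.card_filter, kfun]

lemma kfun_le {n : ℕ} (i : Fin n) (y : Fin n → Bool) : kfun i y ≤ n - 1 := by
  rw [kfun_card]
  calc ((Finset.univ.erase i).filter (fun j => y j = true)).card
      ≤ (Finset.univ.erase i).card := Finset.card_le_card (Finset.filter_subset _ _)
    _ = n - 1 := by
        rw [Finset.card_erase_of_mem (Finset.mem_univ i), Finset.card_univ, Fintype.card_fin]

lemma prod_ite_eq_pow {n : ℕ} (i : Fin n) (y : Fin n → Bool) (p : ℝ) :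
    (∏ j ∈ Finset.univ.erase i, (if y j then p else 1 - p))
      = p ^ (kfun i y) * (1 - p) ^ (n - 1 - kfun i y) := by
  rw [Finset.prod_ite (f := fun _ => p) (g := fun _ => 1 - p), Finset.prod_const,
    Finset.prod_const, kfun_card]
  congr 2
  have h := Finset.card_filter_add_card_filter_not
    (s := Finset.univ.erase i) (p := fun j => y j = true)
  have hc : (Finset.univ.erase i).card = n - 1 := by
    rw [Finset.card_erase_of_mem (Finset.mem_univ i), Finset.card_univ, Fintype.card_fin]
  omega

lemma rel_update_one {n : ℕ} (φ : (Fin n → Bool) → Bool) (i : Fin n) (p : ℝ) :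
    rel φ (Function.update (fun _ => p) i (1:ℝ))
      = ∑ y ∈ Finset.univ.filter (fun y : Fin n → Bool => y i = false),
          bval (φ (Function.update y i true)) *
            ∏ j ∈ Finset.univ.erase i, (if y j then p else 1 - p) := by
  rw [rel]
  have hterm : ∀ x : Fin n → Bool,
      (bval (φ x) * ∏ j, (if x j then Function.update (fun _ => p) i (1:ℝ) j
          else 1 - Function.update (fun _ => p) i 1 j))
        = if x i = true then
            bval (φ x) * ∏ j ∈ Finset.univ.erase i, (if x j then p else 1 - p) else 0 := by
    intro x
    rw [← Finset.mul_prod_erase Finset.univ _ (Finset.mem_univ i)]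
    have h2 : ∀ j ∈ Finset.univ.erase i,
        (if x j then Function.update (fun _ => p) i (1:ℝ) j
          else 1 - Function.update (fun _ => p) i 1 j) = if x j then p else 1 - p := by
      intro j hj
      rw [Function.update_of_ne (Finset.ne_of_mem_erase hj)]
    rw [Finset.prod_congr rfl h2, Function.update_self]
    by_cases hx : x i <;> simp [hx]
  rw [Finset.sum_congr rfl (fun x _ => hterm x), ← Finset.sum_filter]
  refine (Finset.sum_nbij' (i := fun x => Function.update x i false)
    (j := fun y => Function.update y i true) ?_ ?_ ?_ ?_ ?_).symm.symm
  · intro x hx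
    simp [Finset.mem_filter]
  · intro y hy
    simp [Finset.mem_filter]
  · intro x hx
    simp only [Finset.mem_filter, Finset.mem_univ, true_and] at hx
    funext j
    by_cases hj : j = i
    · subst hj; simp [hx]
    · simp [Function.update_of_ne hj]
  · intro y hy
    simp only [Finset.mem_filter, Finset.mem_univ, true_and] at hy
    funext j
    by_cases hj : j = i
    · subst hj; simp [hy]
    · simp [Function.update_of_ne hj]
  · intro x hx
    simp only [Finset.mem_filter, Finset.mem_univ, true_and] at hx
    have h1 : Function.update (Function.update x i false) i true = x := by
      funext j
      by_cases hj : j = i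
      · subst hj; simp [hx]
      · simp [Function.update_of_ne hj]
    rw [h1]
    congr 1
    refine Finset.prod_congr rfl fun j hj => ?_
    have hne := Finset.ne_of_mem_erase hj
    simp [Function.update_of_ne hne]

lemma rel_update_zero {n : ℕ} (φ : (Fin n → Bool) → Bool) (i : Fin n) (p : ℝ) :
    rel φ (Function.update (fun _ => p) i (0:ℝ))
      = ∑ y ∈ Finset.univ.filter (fun y : Fin n → Bool => y i = false),
          bval (φ (Function.update y i false)) *
            ∏ j ∈ Finset.univ.erase i, (if y j then p else 1 - p) := by
  rw [rel]
  have hterm : ∀ x : Fin n → Bool,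
      (bval (φ x) * ∏ j, (if x j then Function.update (fun _ => p) i (0:ℝ) j
          else 1 - Function.update (fun _ => p) i 0 j))
        = if x i = false then
            bval (φ x) * ∏ j ∈ Finset.univ.erase i, (if x j then p else 1 - p) else 0 := by
    intro x
    rw [← Finset.mul_prod_erase Finset.univ _ (Finset.mem_univ i)]
    have h2 : ∀ j ∈ Finset.univ.erase i,
        (if x j then Function.update (fun _ => p) i (0:ℝ) j
          else 1 - Function.update (fun _ => p) i 0 j) = if x j then p else 1 - p := by
      intro j hj
      rw [Function.update_of_ne (Finset.ne_of_mem_erase hj)]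
    rw [Finset.prod_congr rfl h2, Function.update_self]
    by_cases hx : x i <;> simp [hx]
  rw [Finset.sum_congr rfl (fun x _ => hterm x), ← Finset.sum_filter]
  refine Finset.sum_congr rfl fun y hy => ?_
  simp only [Finset.mem_filter, Finset.mem_univ, true_and] at hy
  have : Function.update y i false = y := by
    funext j
    by_cases hj : j = i
    · subst hj; simp [hy]
    · simp [Function.update_of_ne hj]
  rw [this]

/-- Barlow–Proschan structural importance:
`∫₀¹ [h(1_i, p·1) − h(0_i, p·1)] dp = Σ_{r=1}^n n_r(i) (n−r)!(r−1)!/n!`. -/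
theorem barlow_proschan_structural {n : ℕ} (φ : (Fin n → Bool) → Bool)
    (hmono : ∀ x y : Fin n → Bool, (∀ j, x j ≤ y j) → φ x ≤ φ y) (i : Fin n) :
    ∫ p in (0:ℝ)..1,
        (rel φ (Function.update (fun _ => p) i 1)
          - rel φ (Function.update (fun _ => p) i 0)) =
      ∑ r ∈ Finset.Icc 1 n,
        (numCrit φ i r : ℝ) * ((Nat.factorial (n - r) * Nat.factorial (r - 1) : ℕ) : ℝ)
          / (Nat.factorial n : ℝ) := by
  classical
  have hn : 0 < n := i.pos
  set F : Finset (Fin n → Bool) := Finset.univ.filter (fun y : Fin n → Bool => y i = false)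
    with hF
  -- the difference coefficient
  set c : (Fin n → Bool) → ℝ := fun y =>
    bval (φ (Function.update y i true)) - bval (φ (Function.update y i false)) with hc
  -- Step 1: the integrand
  have hint : ∀ p : ℝ,
      rel φ (Function.update (fun _ => p) i 1) - rel φ (Function.update (fun _ => p) i 0)
        = ∑ y ∈ F, c y * (p ^ (kfun i y) * (1 - p) ^ (n - 1 - kfun i y)) := by
    intro p
    rw [rel_update_one, rel_update_zero, ← Finset.sum_sub_distrib]
    refine Finset.sum_congr rfl fun y _ => ?_
    rw [← sub_mul, prod_ite_eq_pow]
  -- Step 2: integrate term by term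
  rw [intervalIntegral.integral_congr (g := fun p =>
      ∑ y ∈ F, c y * (p ^ (kfun i y) * (1 - p) ^ (n - 1 - kfun i y)))
      (fun p _ => hint p)]
  rw [intervalIntegral.integral_finset_sum (fun y _ =>
    (Continuous.intervalIntegrable (by continuity) _ _))]
  have hbeta : ∀ y ∈ F,
      (∫ p in (0:ℝ)..1, c y * (p ^ (kfun i y) * (1 - p) ^ (n - 1 - kfun i y)))
        = c y * ((Nat.factorial (kfun i y) * Nat.factorial (n - 1 - kfun i y) : ℕ)
            / (Nat.factorial n : ℝ)) := by
    intro y _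
    rw [intervalIntegral.integral_const_mul, beta_nat]
    have hk : kfun i y ≤ n - 1 := kfun_le i y
    have : kfun i y + (n - 1 - kfun i y) + 1 = n := by omega
    rw [this]
  rw [Finset.sum_congr rfl hbeta]
  -- Step 3: the coefficient is an indicator of criticality
  have hcrit : ∀ y : Fin n → Bool, c y =
      if φ (Function.update y i true) = true ∧ φ (Function.update y i false) = false
        then 1 else 0 := by
    intro y
    have hle : φ (Function.update y i false) ≤ φ (Function.update y i true) := by
      apply hmono
      intro j
      by_cases hj : j = i
      · subst hj; simp
      · simp [Function.update_of_ne hj]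
    rw [hc]
    cases h1 : φ (Function.update y i true) <;>
      cases h2 : φ (Function.update y i false)
    · simp [bval, h1, h2]
    · rw [h1, h2] at hle; exact absurd hle (by decide)
    · simp [bval, h1, h2]
    · simp [bval, h1, h2]
  -- Step 4: restrict the sum to critical vectors
  set S : Finset (Fin n → Bool) := Finset.univ.filter (fun y : Fin n → Bool =>
      y i = false ∧ φ (Function.update y i true) = true ∧
        φ (Function.update y i false) = false) with hS
  have hFS : ∑ y ∈ F, c y * ((Nat.factorial (kfun i y) * Nat.factorial (n - 1 - kfun i y) : ℕ)
        / (Nat.factorial n : ℝ))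
      = ∑ y ∈ S, ((Nat.factorial (kfun i y) * Nat.factorial (n - 1 - kfun i y) : ℕ)
        / (Nat.factorial n : ℝ)) := by
    have step : ∀ y ∈ F, c y * ((Nat.factorial (kfun i y) * Nat.factorial (n - 1 - kfun i y) : ℕ)
          / (Nat.factorial n : ℝ))
        = if φ (Function.update y i true) = true ∧ φ (Function.update y i false) = false
            then ((Nat.factorial (kfun i y) * Nat.factorial (n - 1 - kfun i y) : ℕ)
              / (Nat.factorial n : ℝ)) else 0 := by
      intro y _
      rw [hcrit y]
      split <;> simp
    rw [Finset.sum_congr rfl step, ← Finset.sum_filter]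
    refine Finset.sum_congr ?_ (fun _ _ => rfl)
    rw [hF, hS, Finset.filter_filter]
  rw [hFS]
  -- Step 5: regroup by the size r = kfun + 1
  rw [← Finset.sum_fiberwise_of_maps_to (g := fun y => kfun i y + 1) (t := Finset.Icc 1 n)
      (fun y _ => by
        simp only [Finset.mem_Icc]
        have := kfun_le i y
        omega)
      (fun y => ((Nat.factorial (kfun i y) * Nat.factorial (n - 1 - kfun i y) : ℕ)
        / (Nat.factorial n : ℝ)))]
  refine Finset.sum_congr rfl fun r hr => ?_
  simp only [Finset.mem_Icc] at hr
  obtain ⟨hr1, hr2⟩ := hr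
  have hcard : S.filter (fun y => kfun i y + 1 = r)
      = Finset.univ.filter (fun x : Fin n → Bool =>
          x i = false ∧
          (∑ j ∈ Finset.univ.erase i, if x j then 1 else 0) = r - 1 ∧
          φ (Function.update x i true) = true ∧ φ (Function.update x i false) = false) := by
    rw [hS, Finset.filter_filter]
    apply Finset.filter_congr
    intro y _
    show (y i = false ∧ _ ∧ _) ∧ kfun i y + 1 = r ↔ _
    rw [show (∑ j ∈ Finset.univ.erase i, if y j then 1 else 0) = kfun i y from rfl]
    constructor
    · rintro ⟨⟨ha, hb, hc'⟩, hd⟩; exact ⟨ha, by omega, hb, hc'⟩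
    · rintro ⟨ha, hb, hc', hd⟩; exact ⟨⟨ha, hc', hd⟩, by omega⟩
  have hval : ∀ y ∈ S.filter (fun y => kfun i y + 1 = r),
      ((Nat.factorial (kfun i y) * Nat.factorial (n - 1 - kfun i y) : ℕ)
          / (Nat.factorial n : ℝ))
        = ((Nat.factorial (n - r) * Nat.factorial (r - 1) : ℕ) : ℝ) / (Nat.factorial n : ℝ) := by
    intro y hy
    simp only [Finset.mem_filter] at hy
    have hk : kfun i y = r - 1 := by omega
    have h2 : n - 1 - (r - 1) = n - r := by omega
    rw [hk, h2, Nat.mul_comm]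
  rw [Finset.sum_congr rfl hval, Finset.sum_const, hcard]
  rw [numCrit, nsmul_eq_mul]
  ring
end

section
/- If component i is in series with the rest of the system (φ(x) = x_i · ψ(x) for some monotone ψ not depending on x_i), then the Barlow–Proschan importance I_h(i) = ∫_0^∞ h(1_i, Q(t)) dF_i(t) is monotone nondecreasing in each Q_j (j ≠ i) and in F_i, in the sense that pointwise increasing Q_j or F_i (keeping the others fixed) does not decrease I_h(i). -/
open Finset MeasureTheory

lemma bval_nonneg (b : Bool) : 0 ≤ bval b := by cases b <;> simp [bval]

lemma bval_le_one (b : Bool) : bval b ≤ 1 := by cases b <;> simp [bval]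

lemma bval_mono {b b' : Bool} (h : b ≤ b') : bval b ≤ bval b' := by
  cases b <;> cases b' <;> simp_all [bval, Bool.le_iff_imp]

lemma rel_update_eq {n : ℕ} (φ : (Fin n → Bool) → Bool) (p : Fin n → ℝ) (j : Fin n) (q : ℝ) :
    rel φ (Function.update p j q) =
      ∑ x : Fin n → Bool, (if x j then q else 1 - q) *
        (bval (φ x) * ∏ l ∈ Finset.univ.erase j, if x l then p l else 1 - p l) := by
  unfold rel
  refine Finset.sum_congr rfl fun x _ => ?_
  rw [← Finset.mul_prod_erase Finset.univ
      (fun l => if x l then Function.update p j q l else 1 - Function.update p j q l)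
      (Finset.mem_univ j)]
  rw [Finset.prod_congr rfl (fun l hl => by
    rw [Function.update_of_ne (Finset.ne_of_mem_erase hl)])]
  simp only [Function.update_self]
  ring

lemma rel_update_mono {n : ℕ} (φ : (Fin n → Bool) → Bool)
    (hmono : ∀ x y : Fin n → Bool, (∀ l, x l ≤ y l) → φ x ≤ φ y)
    (j : Fin n) (p : Fin n → ℝ) (hp : ∀ l, l ≠ j → 0 ≤ p l ∧ p l ≤ 1)
    {q q' : ℝ} (hq : q ≤ q') :
    rel φ (Function.update p j q) ≤ rel φ (Function.update p j q') := by
  rw [rel_update_eq, rel_update_eq, ← sub_nonneg, ← Finset.sum_sub_distrib]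
  set G : (Fin n → Bool) → ℝ := fun x =>
    bval (φ x) * ∏ l ∈ Finset.univ.erase j, if x l then p l else 1 - p l with hG
  have key : ∀ x : Fin n → Bool,
      (if x j then q' else 1 - q') * G x - (if x j then q else 1 - q) * G x
        = (q' - q) * (if x j then (1:ℝ) else -1) * G x := by
    intro x; by_cases h : x j <;> simp [h] <;> ring
  simp only [hG] at key
  simp only [key]
  have hS : 0 ≤ ∑ x : Fin n → Bool, (if x j then (1:ℝ) else -1) * G x := by
    set f : (Fin n → Bool) → ℝ := fun x => (if x j then (1:ℝ) else -1) * G x with hf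
    have hinv : Function.Involutive (fun x : Fin n → Bool => Function.update x j (!(x j))) := by
      intro x
      funext l
      by_cases h : l = j
      · subst h; simp
      · simp [Function.update_of_ne h]
    have hre : ∑ x : Fin n → Bool, f x
        = ∑ x : Fin n → Bool, f (Function.update x j (!(x j))) :=
      (Fintype.sum_bijective _ hinv.bijective _ _ (fun x => rfl)).symm
    have h2 : (2:ℝ) * ∑ x : Fin n → Bool, f x
        = ∑ x : Fin n → Bool, (f x + f (Function.update x j (!(x j)))) := by
      rw [Finset.sum_add_distrib, ← hre]; ring
    have hterm : ∀ x : Fin n → Bool,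
        0 ≤ f x + f (Function.update x j (!(x j))) := by
      intro x
      have hprodeq : ∀ (y : Fin n → Bool), (∀ l, l ≠ j → y l = x l) →
          (∏ l ∈ Finset.univ.erase j, if y l then p l else 1 - p l)
            = ∏ l ∈ Finset.univ.erase j, if x l then p l else 1 - p l :=
        fun y hy => Finset.prod_congr rfl fun l hl => by
          rw [hy l (Finset.ne_of_mem_erase hl)]
      set P : ℝ := ∏ l ∈ Finset.univ.erase j, if x l then p l else 1 - p l with hPdef
      have hP : 0 ≤ P := by
        refine Finset.prod_nonneg fun l hl => ?_
        rcases hp l (Finset.ne_of_mem_erase hl) with ⟨h0, h1⟩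
        by_cases h : x l <;> simp [h] <;> linarith
      have hb : bval (φ (Function.update x j false)) ≤ bval (φ (Function.update x j true)) := by
        refine bval_mono (hmono _ _ fun l => ?_)
        by_cases h : l = j
        · subst h; simp
        · simp [Function.update_of_ne h]
      have fval : ∀ (y : Fin n → Bool), (∀ l, l ≠ j → y l = x l) →
          f y = (if y j then (1:ℝ) else -1) * (bval (φ y) * P) := by
        intro y hy
        simp only [hf, hG]
        rw [hprodeq y hy]
      have fx : f x = (if x j then (1:ℝ) else -1) * (bval (φ x) * P) :=
        fval x (fun _ _ => rfl)
      have fσ : f (Function.update x j (!(x j)))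
          = (if (!(x j)) then (1:ℝ) else -1) *
            (bval (φ (Function.update x j (!(x j)))) * P) := by
        rw [fval (Function.update x j (!(x j)))
          (fun l hl => Function.update_of_ne hl _ _), Function.update_self]
      by_cases h : x j
      · have hx : Function.update x j true = x := by
          rw [← h]; exact Function.update_eq_self j x
        rw [hx] at hb
        rw [fx, fσ]
        simp only [h, Bool.not_true, if_true, Bool.false_eq_true, if_false]
        nlinarith [hb, hP]
      · have h' : x j = false := by simpa using h
        have hx : Function.update x j false = x := by
          rw [← h']; exact Function.update_eq_self j x
        rw [hx] at hb
        rw [fx, fσ]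
        simp only [h', Bool.not_false, if_true, Bool.false_eq_true, if_false]
        nlinarith [hb, hP]
    nlinarith [h2, Finset.sum_nonneg fun x (_ : x ∈ Finset.univ) => hterm x]
  calc (0:ℝ) ≤ (q' - q) * ∑ x : Fin n → Bool, (if x j then (1:ℝ) else -1) * G x :=
        mul_nonneg (by linarith) hS
    _ = ∑ x : Fin n → Bool, (q' - q) * (if x j then (1:ℝ) else -1) * G x := by
        rw [Finset.mul_sum]; exact Finset.sum_congr rfl fun x _ => by ring

lemma rel_mono {n : ℕ} (φ : (Fin n → Bool) → Bool)
    (hmono : ∀ x y : Fin n → Bool, (∀ l, x l ≤ y l) → φ x ≤ φ y)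
    (p p' : Fin n → ℝ) (hp0 : ∀ l, 0 ≤ p l) (hp1 : ∀ l, p' l ≤ 1)
    (hle : ∀ l, p l ≤ p' l) : rel φ p ≤ rel φ p' := by
  have main : ∀ s : Finset (Fin n),
      rel φ p ≤ rel φ (fun l => if l ∈ s then p' l else p l) := by
    intro s
    induction s using Finset.induction with
    | empty => simp
    | @insert a s ha ih =>
      refine ih.trans ?_
      set m : Fin n → ℝ := fun l => if l ∈ s then p' l else p l with hm
      have h1 : m = Function.update m a (p a) := by
        funext l
        by_cases h : l = a
        · subst h; simp [hm, ha]
        · rw [Function.update_of_ne h]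
      have h2 : (fun l => if l ∈ insert a s then p' l else p l)
          = Function.update m a (p' a) := by
        funext l
        by_cases h : l = a
        · subst h; simp
        · rw [Function.update_of_ne h]; simp [hm, h]
      rw [h2]
      conv_lhs => rw [h1]
      refine rel_update_mono φ hmono a m (fun l _ => ?_) (hle a)
      constructor
      · by_cases h : l ∈ s <;> simp [hm, h]
        · exact le_trans (hp0 l) (hle l)
        · exact hp0 l
      · by_cases h : l ∈ s <;> simp [hm, h]
        · exact hp1 l
        · exact le_trans (hle l) (hp1 l)
  have := main Finset.univ
  simpa using this

lemma rel_nonneg {n : ℕ} (φ : (Fin n → Bool) → Bool) (p : Fin n → ℝ)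
    (hp : ∀ l, 0 ≤ p l ∧ p l ≤ 1) : 0 ≤ rel φ p := by
  refine Finset.sum_nonneg fun x _ => mul_nonneg (bval_nonneg _) ?_
  refine Finset.prod_nonneg fun l _ => ?_
  rcases hp l with ⟨h0, h1⟩
  by_cases h : x l <;> simp [h] <;> linarith

lemma rel_le_card {n : ℕ} (φ : (Fin n → Bool) → Bool) (p : Fin n → ℝ)
    (hp : ∀ l, 0 ≤ p l ∧ p l ≤ 1) : rel φ p ≤ (2:ℝ)^n := by
  have : rel φ p ≤ ∑ _x : Fin n → Bool, (1:ℝ) := by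
    refine Finset.sum_le_sum fun x _ => ?_
    have hP : (∏ l, if x l then p l else 1 - p l) ≤ 1 := by
      refine Finset.prod_le_one (fun l _ => ?_) (fun l _ => ?_)
      · rcases hp l with ⟨h0, h1⟩; by_cases h : x l <;> simp [h] <;> linarith
      · rcases hp l with ⟨h0, h1⟩; by_cases h : x l <;> simp [h] <;> linarith
    have hP0 : 0 ≤ ∏ l, if x l then p l else 1 - p l := by
      refine Finset.prod_nonneg fun l _ => ?_
      rcases hp l with ⟨h0, h1⟩; by_cases h : x l <;> simp [h] <;> linarith
    calc bval (φ x) * ∏ l, (if x l then p l else 1 - p l)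
        ≤ 1 * 1 := mul_le_mul (bval_le_one _) hP hP0 zero_le_one
      _ = 1 := by ring
  simpa [Finset.card_univ] using this

/-- measure comparison on lower sets from CDF domination -/
lemma measure_lowerSet_le (μ μ' : Measure ℝ) [IsProbabilityMeasure μ]
    [IsProbabilityMeasure μ'] (hF : ∀ t : ℝ, μ (Set.Iic t) ≤ μ' (Set.Iic t))
    {S : Set ℝ} (hS : IsLowerSet S) : μ S ≤ μ' S := by
  rcases Set.eq_empty_or_nonempty S with h | hne
  · simp [h]
  by_cases hbdd : BddAbove S
  · set u := sSup S with hu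
    have hsub : S ⊆ Set.Iic u := fun x hx => le_csSup hbdd hx
    by_cases hmem : u ∈ S
    · have : S = Set.Iic u := by
        refine Set.Subset.antisymm hsub fun x hx => hS hx hmem
      rw [this]; exact hF u
    · have hSeq : S = Set.Iio u := by
        refine Set.Subset.antisymm ?_ ?_
        · intro x hx
          rcases lt_or_eq_of_le (show x ≤ u from hsub hx) with h | h
          · exact h
          · exact absurd (h ▸ hx) hmem
        · intro x hx
          obtain ⟨s, hsS, hxs⟩ := exists_lt_of_lt_csSup hne hx
          exact hS hxs.le hsS
      rw [hSeq]
      have hcov : Set.Iio u = ⋃ k : ℕ, Set.Iic (u - ((k:ℝ)+1)⁻¹) := by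
        ext x
        simp only [Set.mem_Iio, Set.mem_iUnion, Set.mem_Iic]
        constructor
        · intro hx
          obtain ⟨k, hk⟩ := exists_nat_one_div_lt (sub_pos.mpr hx)
          exact ⟨k, by rw [one_div] at hk; linarith⟩
        · rintro ⟨k, hk⟩
          have : (0:ℝ) < ((k:ℝ)+1)⁻¹ := by positivity
          linarith
      have hmonot : Monotone fun k : ℕ => Set.Iic (u - ((k:ℝ)+1)⁻¹) := by
        intro a b hab
        apply Set.Iic_subset_Iic.mpr
        have hab' : ((a:ℝ)+1) ≤ ((b:ℝ)+1) := by
          have : (a:ℝ) ≤ (b:ℝ) := Nat.cast_le.mpr hab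
          linarith
        have : ((b:ℝ)+1)⁻¹ ≤ ((a:ℝ)+1)⁻¹ :=
          inv_anti₀ (by positivity) hab'
        linarith
      rw [hcov, hmonot.measure_iUnion]
      refine iSup_le fun k => ?_
      exact (hF _).trans (measure_mono (Set.subset_iUnion (fun k : ℕ => Set.Iic (u - ((k:ℝ)+1)⁻¹)) k))
  · have : S = Set.univ := by
      refine Set.eq_univ_of_forall fun x => ?_
      rcases not_bddAbove_iff.mp hbdd x with ⟨s, hsS, hxs⟩
      exact hS hxs.le hsS
    rw [this]
    simp

/-- stochastic dominance: antitone nonneg bounded `g`, `F ≤ F'` implies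
`∫ g dμ ≤ ∫ g dμ'`. -/
lemma integral_antitone_mono (g : ℝ → ℝ) (hg : Antitone g) (hg0 : ∀ t, 0 ≤ g t)
    (C : ℝ) (hgC : ∀ t, g t ≤ C)
    (μ μ' : Measure ℝ) [IsProbabilityMeasure μ] [IsProbabilityMeasure μ']
    (hF : ∀ t : ℝ, μ (Set.Iic t) ≤ μ' (Set.Iic t)) :
    ∫ t, g t ∂μ ≤ ∫ t, g t ∂μ' := by
  have hmeas : Measurable g := hg.measurable
  have h1 : ∫ t, g t ∂μ = (∫⁻ t, ENNReal.ofReal (g t) ∂μ).toReal :=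
    integral_eq_lintegral_of_nonneg_ae (Filter.Eventually.of_forall hg0)
      hmeas.aestronglyMeasurable
  have h1' : ∫ t, g t ∂μ' = (∫⁻ t, ENNReal.ofReal (g t) ∂μ').toReal :=
    integral_eq_lintegral_of_nonneg_ae (Filter.Eventually.of_forall hg0)
      hmeas.aestronglyMeasurable
  have hlc : ∫⁻ t, ENNReal.ofReal (g t) ∂μ = ∫⁻ s in Set.Ioi (0:ℝ), μ {a : ℝ | s < g a} :=
    lintegral_eq_lintegral_meas_lt μ (Filter.Eventually.of_forall hg0) hmeas.aemeasurable
  have hlc' : ∫⁻ t, ENNReal.ofReal (g t) ∂μ' = ∫⁻ s in Set.Ioi (0:ℝ), μ' {a : ℝ | s < g a} :=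
    lintegral_eq_lintegral_meas_lt μ' (Filter.Eventually.of_forall hg0) hmeas.aemeasurable
  have hcomp : ∫⁻ s in Set.Ioi (0:ℝ), μ {a : ℝ | s < g a}
      ≤ ∫⁻ s in Set.Ioi (0:ℝ), μ' {a : ℝ | s < g a} := by
    refine lintegral_mono fun s => ?_
    refine measure_lowerSet_le μ μ' hF ?_
    intro a b hba ha
    exact lt_of_lt_of_le ha (hg hba)
  have hfin : ∫⁻ t, ENNReal.ofReal (g t) ∂μ' ≠ ⊤ := by
    have : ∫⁻ t, ENNReal.ofReal (g t) ∂μ' ≤ ∫⁻ _t, ENNReal.ofReal C ∂μ' :=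
      lintegral_mono fun t => ENNReal.ofReal_le_ofReal (hgC t)
    rw [lintegral_const, measure_univ, mul_one] at this
    exact ne_top_of_le_ne_top ENNReal.ofReal_ne_top this
  rw [h1, h1']
  exact ENNReal.toReal_mono hfin (by rw [hlc, hlc']; exact hcomp)

/-- If component `i` is in series with the rest of the system, then its
Barlow–Proschan importance `I_h(i) = ∫₀^∞ h(1_i, Q(t)) dF_i(t)` is
nondecreasing in each `Q_j` (`j ≠ i`) and in `F_i`. -/
theorem series_component_importance_monotone {n : ℕ}
    (φ : (Fin n → Bool) → Bool)
    (hmono : ∀ x y : Fin n → Bool, (∀ l, x l ≤ y l) → φ x ≤ φ y)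
    (i : Fin n)
    (hseries : ∀ x : Fin n → Bool, φ (Function.update x i false) = false)
    -- data for monotonicity in `Q_j`, `j ≠ i`: `Q'` increases `Q` in the
    -- `j`-th coordinate only, the lifetime density `f` of `i` is fixed
    (Q Q' : Fin n → ℝ → ℝ) (j : Fin n) (hji : j ≠ i) (f : ℝ → ℝ)
    (hQr : ∀ l t, Q l t ∈ Set.Icc (0:ℝ) 1) (hQ'r : ∀ l t, Q' l t ∈ Set.Icc (0:ℝ) 1)
    (hQle : ∀ t, Q j t ≤ Q' j t) (hQeq : ∀ l, l ≠ j → Q' l = Q l)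
    (hf : ∀ t, 0 ≤ f t)
    (hintQ : IntegrableOn
      (fun t => rel φ (Function.update (fun l => Q l t) i 1) * f t) (Set.Ioi (0:ℝ)))
    (hintQ' : IntegrableOn
      (fun t => rel φ (Function.update (fun l => Q' l t) i 1) * f t) (Set.Ioi (0:ℝ)))
    -- data for monotonicity in `F_i`: two lifetime distributions of `i`
    -- given as probability measures `μ, μ'` with `F(t) = μ(Iic t) ≤ μ'(Iic t)`,
    -- the component reliabilities `Q` being nonincreasing in time
    (μ μ' : Measure ℝ) (hμ : IsProbabilityMeasure μ) (hμ' : IsProbabilityMeasure μ')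
    (hF : ∀ t : ℝ, μ (Set.Iic t) ≤ μ' (Set.Iic t))
    (hQanti : ∀ l, Antitone (Q l)) :
    (∫ t in Set.Ioi (0:ℝ), rel φ (Function.update (fun l => Q l t) i 1) * f t)
        ≤ ∫ t in Set.Ioi (0:ℝ), rel φ (Function.update (fun l => Q' l t) i 1) * f t
    ∧ (∫ t, rel φ (Function.update (fun l => Q l t) i 1) ∂μ)
        ≤ ∫ t, rel φ (Function.update (fun l => Q l t) i 1) ∂μ' := by
  have hrange : ∀ (R : Fin n → ℝ → ℝ), (∀ l t, R l t ∈ Set.Icc (0:ℝ) 1) →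
      ∀ t l, 0 ≤ Function.update (fun l => R l t) i 1 l
        ∧ Function.update (fun l => R l t) i 1 l ≤ 1 := by
    intro R hR t l
    by_cases h : l = i
    · subst h; simp
    · rw [Function.update_of_ne h]
      exact ⟨(hR l t).1, (hR l t).2⟩
  constructor
  · refine integral_mono hintQ hintQ' fun t => ?_
    refine mul_le_mul_of_nonneg_right ?_ (hf t)
    refine rel_mono φ hmono _ _ (fun l => (hrange Q hQr t l).1)
      (fun l => (hrange Q' hQ'r t l).2) (fun l => ?_)
    by_cases h : l = i
    · subst h; simp
    · rw [Function.update_of_ne h, Function.update_of_ne h]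
      by_cases h2 : l = j
      · subst h2; exact hQle t
      · rw [hQeq l h2]
  · set g : ℝ → ℝ := fun t => rel φ (Function.update (fun l => Q l t) i 1) with hg
    have hganti : Antitone g := by
      intro s t hst
      refine rel_mono φ hmono _ _ (fun l => (hrange Q hQr t l).1)
        (fun l => (hrange Q hQr s l).2) (fun l => ?_)
      by_cases h : l = i
      · subst h; simp
      · rw [Function.update_of_ne h, Function.update_of_ne h]
        exact hQanti l hst
    exact integral_antitone_mono g hganti
      (fun t => rel_nonneg φ _ (hrange Q hQr t))
      ((2:ℝ)^n) (fun t => rel_le_card φ _ (hrange Q hQr t)) μ μ' hF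
end
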